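/- Let S : ℝ² → ℝ³ be a smooth (C^∞) map of (t,x) with |S(t,x)| = 1 for all (t,x), satisfying the SO(3)-invariant mKdV spin model ∂_t S = -( ∂_x³ S + (3/2) ∂_x( |∂_x S|² S ) ). Then the energy density obeys the local conservation law ∂_t( (1/2)|∂_x S|² ) = ∂_x( (1/2)|∂_x² S|² - ∂_x S · ∂_x³ S - (15/8)|∂_x S|⁴ ) at every point; consequently ∫ (1/2)|S_x|² dx is a constant of motion under suitable boundary conditions. -/

import Mathlib

noncomputable section

/-- Partial derivative with respect to the first variable `t`. -/
def pt {E : Type*} [NormedAddCommGroup E] [NormedSpace ℝ E]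
    (f : ℝ × ℝ → E) : ℝ × ℝ → E := fun p => deriv (fun s => f (s, p.2)) p.1

/-- Partial derivative with respect to the second variable `x`. -/
def px {E : Type*} [NormedAddCommGroup E] [NormedSpace ℝ E]
    (f : ℝ × ℝ → E) : ℝ × ℝ → E := fun p => deriv (fun s => f (p.1, s)) p.2

/-- Euclidean dot product on `ℝ³`. -/
def dot3 (a b : Fin 3 → ℝ) : ℝ := a 0 * b 0 + a 1 * b 1 + a 2 * b 2

/-- Euclidean norm on `ℝ³`. -/
def norm3 (a : Fin 3 → ℝ) : ℝ := Real.sqrt (dot3 a a)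

/-! ### Auxiliary machinery -/

/-- `x`-partial derivative defined via `fderiv`. -/
def pxF {E : Type*} [NormedAddCommGroup E] [NormedSpace ℝ E]
    (f : ℝ × ℝ → E) : ℝ × ℝ → E := fun p => fderiv ℝ f p (0, 1)

/-- `t`-partial derivative defined via `fderiv`. -/
def ptF {E : Type*} [NormedAddCommGroup E] [NormedSpace ℝ E]
    (f : ℝ × ℝ → E) : ℝ × ℝ → E := fun p => fderiv ℝ f p (1, 0)

section Aux
variable {E : Type*} [NormedAddCommGroup E] [NormedSpace ℝ E]

lemma hasDerivAt_px' {f : ℝ × ℝ → E} (hf : Differentiable ℝ f) (p : ℝ × ℝ) :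
    HasDerivAt (fun s => f (p.1, s)) (pxF f p) p.2 :=
  (hf (p.1, p.2)).hasFDerivAt.comp_hasDerivAt p.2
    (HasDerivAt.prodMk (hasDerivAt_const p.2 p.1) (hasDerivAt_id p.2))

lemma hasDerivAt_pt' {f : ℝ × ℝ → E} (hf : Differentiable ℝ f) (p : ℝ × ℝ) :
    HasDerivAt (fun s => f (s, p.2)) (ptF f p) p.1 :=
  (hf (p.1, p.2)).hasFDerivAt.comp_hasDerivAt p.1
    (HasDerivAt.prodMk (hasDerivAt_id p.1) (hasDerivAt_const p.1 p.2))

lemma contDiff_pxF {f : ℝ × ℝ → E} (hf : ContDiff ℝ (⊤:ℕ∞) f) :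
    ContDiff ℝ (⊤:ℕ∞) (pxF f) :=
  (hf.fderiv_right (m := (⊤:ℕ∞)) (by exact_mod_cast le_top)).clm_apply contDiff_const

lemma contDiff_ptF {f : ℝ × ℝ → E} (hf : ContDiff ℝ (⊤:ℕ∞) f) :
    ContDiff ℝ (⊤:ℕ∞) (ptF f) :=
  (hf.fderiv_right (m := (⊤:ℕ∞)) (by exact_mod_cast le_top)).clm_apply contDiff_const

lemma fderiv_clm_apply_const {f : ℝ × ℝ → E} (hf : ContDiff ℝ (⊤:ℕ∞) f)
    (p v w : ℝ × ℝ) :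
    fderiv ℝ (fun q => fderiv ℝ f q v) p w = fderiv ℝ (fderiv ℝ f) p w v := by
  have hd : DifferentiableAt ℝ (fderiv ℝ f) p :=
    ((hf.fderiv_right (m := (⊤:ℕ∞)) (by exact_mod_cast le_top)).differentiable
      (by simp)) p
  have h := (ContinuousLinearMap.apply ℝ E v).hasFDerivAt.comp p hd.hasFDerivAt
  have h2 : fderiv ℝ (fun q => fderiv ℝ f q v) p
      = (ContinuousLinearMap.apply ℝ E v).comp (fderiv ℝ (fderiv ℝ f) p) := h.fderiv
  rw [h2]; rfl

lemma ptF_pxF {f : ℝ × ℝ → E} (hf : ContDiff ℝ (⊤:ℕ∞) f) (p : ℝ × ℝ) :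
    ptF (pxF f) p = pxF (ptF f) p := by
  have h1 : ∀ y, HasFDerivAt f (fderiv ℝ f y) y := fun y =>
    ((hf.differentiable (by simp)) y).hasFDerivAt
  have hd : DifferentiableAt ℝ (fderiv ℝ f) p :=
    ((hf.fderiv_right (m := (⊤:ℕ∞)) (by exact_mod_cast le_top)).differentiable
      (by simp)) p
  have sym := second_derivative_symmetric h1 hd.hasFDerivAt ((0:ℝ),(1:ℝ)) ((1:ℝ),(0:ℝ))
  show fderiv ℝ (fun q => fderiv ℝ f q (0,1)) p (1,0)
      = fderiv ℝ (fun q => fderiv ℝ f q (1,0)) p (0,1)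
  rw [fderiv_clm_apply_const hf p (0,1) (1,0), fderiv_clm_apply_const hf p (1,0) (0,1)]
  exact sym.symm

end Aux

lemma hasDerivAt_apply3 {f : ℝ → Fin 3 → ℝ} {f' : Fin 3 → ℝ} {s : ℝ}
    (hf : HasDerivAt f f' s) (i : Fin 3) : HasDerivAt (fun t => f t i) (f' i) s :=
  (ContinuousLinearMap.proj (R := ℝ) (φ := fun _ : Fin 3 => ℝ) i).hasFDerivAt.comp_hasDerivAt s hf

lemma HasDerivAt.dot3' {f g : ℝ → Fin 3 → ℝ} {f' g' : Fin 3 → ℝ} {s : ℝ}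
    (hf : HasDerivAt f f' s) (hg : HasDerivAt g g' s) :
    HasDerivAt (fun t => dot3 (f t) (g t)) (dot3 f' (g s) + dot3 (f s) g') s := by
  have h := (((hasDerivAt_apply3 hf 0).mul (hasDerivAt_apply3 hg 0)).add
    ((hasDerivAt_apply3 hf 1).mul (hasDerivAt_apply3 hg 1))).add
    ((hasDerivAt_apply3 hf 2).mul (hasDerivAt_apply3 hg 2))
  refine h.congr_deriv ?_
  simp only [dot3]; ring

lemma contDiff_apply3 {f : ℝ × ℝ → Fin 3 → ℝ} (hf : ContDiff ℝ (⊤:ℕ∞) f) (i : Fin 3) :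
    ContDiff ℝ (⊤:ℕ∞) (fun q => f q i) :=
  (ContinuousLinearMap.proj (R := ℝ) (φ := fun _ : Fin 3 => ℝ) i).contDiff.comp hf

lemma contDiff_dot3 {f g : ℝ × ℝ → Fin 3 → ℝ} (hf : ContDiff ℝ (⊤:ℕ∞) f)
    (hg : ContDiff ℝ (⊤:ℕ∞) g) : ContDiff ℝ (⊤:ℕ∞) (fun q => dot3 (f q) (g q)) := by
  simp only [dot3]
  exact (((contDiff_apply3 hf 0).mul (contDiff_apply3 hg 0)).add
    ((contDiff_apply3 hf 1).mul (contDiff_apply3 hg 1))).add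
    ((contDiff_apply3 hf 2).mul (contDiff_apply3 hg 2))

lemma dot3_self_nonneg (a : Fin 3 → ℝ) : 0 ≤ dot3 a a := by
  simp only [dot3]; nlinarith [sq_nonneg (a 0), sq_nonneg (a 1), sq_nonneg (a 2)]

lemma norm3_sq (a : Fin 3 → ℝ) : norm3 a ^ 2 = dot3 a a :=
  Real.sq_sqrt (dot3_self_nonneg a)

/-- Local conservation law of the energy density for the SO(3)-invariant
mKdV spin model `S_t = -(S_xxx + (3/2)(|S_x|²S)_x)`. -/
theorem mkdv_spin_energy_conservation
    (S : ℝ × ℝ → Fin 3 → ℝ)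
    (hS : ContDiff ℝ (⊤ : ℕ∞) S)
    (hunit : ∀ p, norm3 (S p) = 1)
    (hflow : ∀ p, pt S p
      = -(px (px (px S)) p
          + (3 / 2 : ℝ) • px (fun q => (norm3 (px S q)) ^ 2 • S q) p)) :
    ∀ p, pt (fun q => (1 / 2) * (norm3 (px S q)) ^ 2) p
      = px (fun q => (1 / 2) * (norm3 (px (px S) q)) ^ 2
          - dot3 (px S q) (px (px (px S)) q)
          - (15 / 8) * (norm3 (px S q)) ^ 4) p := by
  intro p
  -- smoothness bookkeeping
  have hS1 : Differentiable ℝ S := hS.differentiable (by simp)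
  have hcu : ContDiff ℝ (⊤:ℕ∞) (pxF S) := contDiff_pxF hS
  have hcu2 : ContDiff ℝ (⊤:ℕ∞) (pxF (pxF S)) := contDiff_pxF hcu
  have hcu3 : ContDiff ℝ (⊤:ℕ∞) (pxF (pxF (pxF S))) := contDiff_pxF hcu2
  have hcT : ContDiff ℝ (⊤:ℕ∞) (ptF S) := contDiff_ptF hS
  have hdu : Differentiable ℝ (pxF S) := hcu.differentiable (by simp)
  have hdu2 : Differentiable ℝ (pxF (pxF S)) := hcu2.differentiable (by simp)
  have hdu3 : Differentiable ℝ (pxF (pxF (pxF S))) :=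
    hcu3.differentiable (by simp)
  have hdT : Differentiable ℝ (ptF S) := hcT.differentiable (by simp)
  have hcw : ContDiff ℝ (⊤:ℕ∞) (fun q => dot3 (pxF S q) (pxF S q)) := contDiff_dot3 hcu hcu
  have hcm : ContDiff ℝ (⊤:ℕ∞) (fun q => dot3 (pxF S q) (pxF S q) • S q) := hcw.smul hS
  have hdm : Differentiable ℝ (fun q => dot3 (pxF S q) (pxF S q) • S q) :=
    hcm.differentiable (by simp)
  -- identification of px / pt with pxF / ptF
  have e1 : px S = pxF S := funext fun q => (hasDerivAt_px' hS1 q).deriv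
  have e2 : px (px S) = pxF (pxF S) := by
    rw [e1]; exact funext fun q => (hasDerivAt_px' hdu q).deriv
  have e3 : px (px (px S)) = pxF (pxF (pxF S)) := by
    rw [e2]; exact funext fun q => (hasDerivAt_px' hdu2 q).deriv
  have eT : pt S = ptF S := funext fun q => (hasDerivAt_pt' hS1 q).deriv
  have em : (fun q => (norm3 (px S q)) ^ 2 • S q)
      = (fun q => dot3 (pxF S q) (pxF S q) • S q) := by
    funext q; rw [e1, norm3_sq]
  have e4 : px (fun q => dot3 (pxF S q) (pxF S q) • S q)
      = pxF (fun q => dot3 (pxF S q) (pxF S q) • S q) :=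
    funext fun q => (hasDerivAt_px' hdm q).deriv
  -- the flow in fderiv form
  have hflow2 : ptF S = fun q => -(pxF (pxF (pxF S)) q
      + (3/2 : ℝ) • pxF (fun r => dot3 (pxF S r) (pxF S r) • S r) q) := by
    funext q
    have h := hflow q
    rw [eT, e3, em, e4] at h
    exact h
  -- unit length in dot3 form, and orthogonality S ⟂ S_x
  have hsds : ∀ q, dot3 (S q) (S q) = 1 := fun q => by
    rw [← norm3_sq, hunit q]; norm_num
  have horto : ∀ q : ℝ × ℝ, dot3 (pxF S q) (S q) + dot3 (S q) (pxF S q) = 0 := by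
    intro q
    have h1 : HasDerivAt (fun s => dot3 (S (q.1, s)) (S (q.1, s)))
        (dot3 (pxF S q) (S (q.1, q.2)) + dot3 (S (q.1, q.2)) (pxF S q)) q.2 :=
      (hasDerivAt_px' hS1 q).dot3' (hasDerivAt_px' hS1 q)
    have h2 : HasDerivAt (fun s => dot3 (S (q.1, s)) (S (q.1, s))) 0 q.2 := by
      have he : (fun s => dot3 (S (q.1, s)) (S (q.1, s))) = fun _ => (1:ℝ) :=
        funext fun s => hsds _
      rw [he]; exact hasDerivAt_const _ _
    exact h1.unique h2
  -- x-derivative of |S_x|² S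
  have hm1 : pxF (fun r => dot3 (pxF S r) (pxF S r) • S r)
      = fun q => dot3 (pxF S q) (pxF S q) • pxF S q
        + (dot3 (pxF (pxF S) q) (pxF S q) + dot3 (pxF S q) (pxF (pxF S) q)) • S q := by
    funext q
    exact (hasDerivAt_px' hdm q).unique
      (((hasDerivAt_px' hdu q).dot3' (hasDerivAt_px' hdu q)).smul (hasDerivAt_px' hS1 q))
  have hflow3 : ptF S = fun q => -(pxF (pxF (pxF S)) q
      + (3/2 : ℝ) • (dot3 (pxF S q) (pxF S q) • pxF S q
        + (dot3 (pxF (pxF S) q) (pxF S q) + dot3 (pxF S q) (pxF (pxF S) q)) • S q)) := by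
    rw [hflow2, hm1]
  -- x-derivative of S_t
  have hval : pxF (ptF S) p = -(pxF (pxF (pxF (pxF S))) p
      + (3/2 : ℝ) • ((dot3 (pxF S p) (pxF S p) • pxF (pxF S) p
          + (dot3 (pxF (pxF S) p) (pxF S p) + dot3 (pxF S p) (pxF (pxF S) p)) • pxF S p)
        + ((dot3 (pxF (pxF S) p) (pxF S p) + dot3 (pxF S p) (pxF (pxF S) p)) • pxF S p
          + ((dot3 (pxF (pxF (pxF S)) p) (pxF S p) + dot3 (pxF (pxF S) p) (pxF (pxF S) p))
            + (dot3 (pxF (pxF S) p) (pxF (pxF S) p) + dot3 (pxF S p) (pxF (pxF (pxF S)) p)))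
              • S p))) := by
    refine (hasDerivAt_px' hdT p).unique ?_
    have h : HasDerivAt (fun s => -(pxF (pxF (pxF S)) (p.1, s)
        + (3/2 : ℝ) • (dot3 (pxF S (p.1, s)) (pxF S (p.1, s)) • pxF S (p.1, s)
          + (dot3 (pxF (pxF S) (p.1, s)) (pxF S (p.1, s))
            + dot3 (pxF S (p.1, s)) (pxF (pxF S) (p.1, s))) • S (p.1, s))))
        (-(pxF (pxF (pxF (pxF S))) p
          + (3/2 : ℝ) • ((dot3 (pxF S p) (pxF S p) • pxF (pxF S) p
              + (dot3 (pxF (pxF S) p) (pxF S p) + dot3 (pxF S p) (pxF (pxF S) p)) • pxF S p)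
            + ((dot3 (pxF (pxF S) p) (pxF S p) + dot3 (pxF S p) (pxF (pxF S) p)) • pxF S p
              + ((dot3 (pxF (pxF (pxF S)) p) (pxF S p) + dot3 (pxF (pxF S) p) (pxF (pxF S) p))
                + (dot3 (pxF (pxF S) p) (pxF (pxF S) p)
                  + dot3 (pxF S p) (pxF (pxF (pxF S)) p))) • S p)))) p.2 :=
      ((hasDerivAt_px' hdu3 p).add
        (((((hasDerivAt_px' hdu p).dot3' (hasDerivAt_px' hdu p)).smul (hasDerivAt_px' hdu p)).add
          ((((hasDerivAt_px' hdu2 p).dot3' (hasDerivAt_px' hdu p)).add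
            ((hasDerivAt_px' hdu p).dot3' (hasDerivAt_px' hdu2 p))).smul
              (hasDerivAt_px' hS1 p))).const_smul ((3/2 : ℝ)))).neg
    have hfun : (fun s => ptF S (p.1, s)) = (fun s => -(pxF (pxF (pxF S)) (p.1, s)
        + (3/2 : ℝ) • (dot3 (pxF S (p.1, s)) (pxF S (p.1, s)) • pxF S (p.1, s)
          + (dot3 (pxF (pxF S) (p.1, s)) (pxF S (p.1, s))
            + dot3 (pxF S (p.1, s)) (pxF (pxF S) (p.1, s))) • S (p.1, s)))) := by
      funext s
      rw [hflow3]
    rw [hfun]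
    exact h
  -- rewrite the goal into dot3 / pxF form
  have G1 : (fun q => (1/2 : ℝ) * (norm3 (px S q)) ^ 2)
      = (fun q => (1/2 : ℝ) * dot3 (pxF S q) (pxF S q)) := by
    funext q; rw [e1, norm3_sq]
  have G2 : (fun q => (1/2 : ℝ) * (norm3 (px (px S) q)) ^ 2
        - dot3 (px S q) (px (px (px S)) q)
        - (15/8 : ℝ) * (norm3 (px S q)) ^ 4)
      = (fun q => (1/2 : ℝ) * dot3 (pxF (pxF S) q) (pxF (pxF S) q)
        - dot3 (pxF S q) (pxF (pxF (pxF S)) q)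
        - (15/8 : ℝ) * (dot3 (pxF S q) (pxF S q) * dot3 (pxF S q) (pxF S q))) := by
    funext q
    rw [e3, e2, e1, norm3_sq,
      show (norm3 (pxF S q)) ^ 4 = dot3 (pxF S q) (pxF S q) * dot3 (pxF S q) (pxF S q) by
        rw [← norm3_sq]; ring]
  rw [G1, G2]
  -- compute both sides
  have hL : pt (fun q => (1/2 : ℝ) * dot3 (pxF S q) (pxF S q)) p
      = (1/2 : ℝ) * (dot3 (ptF (pxF S) p) (pxF S p) + dot3 (pxF S p) (ptF (pxF S) p)) :=
    HasDerivAt.deriv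
      (((hasDerivAt_pt' hdu p).dot3' (hasDerivAt_pt' hdu p)).const_mul ((1/2 : ℝ)))
  have hR : px (fun q => (1/2 : ℝ) * dot3 (pxF (pxF S) q) (pxF (pxF S) q)
        - dot3 (pxF S q) (pxF (pxF (pxF S)) q)
        - (15/8 : ℝ) * (dot3 (pxF S q) (pxF S q) * dot3 (pxF S q) (pxF S q))) p
      = ((1/2 : ℝ) * (dot3 (pxF (pxF (pxF S)) p) (pxF (pxF S) p)
            + dot3 (pxF (pxF S) p) (pxF (pxF (pxF S)) p))
        - (dot3 (pxF (pxF S) p) (pxF (pxF (pxF S)) p)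
            + dot3 (pxF S p) (pxF (pxF (pxF (pxF S))) p)))
        - (15/8 : ℝ) * ((dot3 (pxF (pxF S) p) (pxF S p) + dot3 (pxF S p) (pxF (pxF S) p))
              * dot3 (pxF S p) (pxF S p)
            + dot3 (pxF S p) (pxF S p)
              * (dot3 (pxF (pxF S) p) (pxF S p) + dot3 (pxF S p) (pxF (pxF S) p))) :=
    HasDerivAt.deriv
      (((((hasDerivAt_px' hdu2 p).dot3' (hasDerivAt_px' hdu2 p)).const_mul ((1/2 : ℝ))).sub
        ((hasDerivAt_px' hdu p).dot3' (hasDerivAt_px' hdu3 p))).sub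
        ((((hasDerivAt_px' hdu p).dot3' (hasDerivAt_px' hdu p)).mul
          ((hasDerivAt_px' hdu p).dot3' (hasDerivAt_px' hdu p))).const_mul ((15/8 : ℝ))))
  rw [hL, hR, ptF_pxF hS p, hval]
  have hortop := horto p
  simp only [dot3, Pi.add_apply, Pi.smul_apply, Pi.neg_apply, smul_eq_mul] at hortop ⊢
  linear_combination (-(3/4 : ℝ)) * (
      (pxF (pxF (pxF S)) p 0 * pxF S p 0 + pxF (pxF (pxF S)) p 1 * pxF S p 1
        + pxF (pxF (pxF S)) p 2 * pxF S p 2)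
      + (pxF (pxF S) p 0 * pxF (pxF S) p 0 + pxF (pxF S) p 1 * pxF (pxF S) p 1
        + pxF (pxF S) p 2 * pxF (pxF S) p 2)
      + (pxF (pxF S) p 0 * pxF (pxF S) p 0 + pxF (pxF S) p 1 * pxF (pxF S) p 1
        + pxF (pxF S) p 2 * pxF (pxF S) p 2)
      + (pxF S p 0 * pxF (pxF (pxF S)) p 0 + pxF S p 1 * pxF (pxF (pxF S)) p 1
        + pxF S p 2 * pxF (pxF (pxF S)) p 2)) * hortop
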